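/- arXiv:0710.2704 — 3 statements merged into one kernel-verified Lean document; each statement's English description precedes it below -/
import Mathlib

section
/- There exist constants C, N₀ > 0 depending only on α and β ≠ 0 such that: if ξ₁ + ξ₂ + ξ₃ = 0, and with N_max ≥ N_med ≥ N_min the decreasing rearrangement of |ξ₁|, |ξ₂|, |ξ₃| one has N_med ≥ N₀, then |p(ξ₁) + p(ξ₂) + p(ξ₃)| ≥ C · N_max⁴ · N_min, where p(ξ) = -βξ⁵ + αξ³. -/
set_option maxHeartbeats 800000

private lemma med_aux (a b c : ℝ) :
    min a (min b c) ≤ a + b + c - max a (max b c) - min a (min b c) ∧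
    a + b + c - max a (max b c) - min a (min b c) ≤ max a (max b c) ∧
    a * b * c = max a (max b c) *
      (a + b + c - max a (max b c) - min a (min b c)) * min a (min b c) := by
  simp only [max_def, min_def]
  split_ifs <;> refine ⟨by linarith, by linarith, by first | ring1 | (exfalso; linarith)⟩

theorem kawahara_resonance_lower_bound (α β : ℝ) (hβ : β ≠ 0) :
    ∃ C > (0:ℝ), ∃ N₀ > (0:ℝ), ∀ ξ₁ ξ₂ ξ₃ : ℝ, ξ₁ + ξ₂ + ξ₃ = 0 →
      ∀ Nmax Nmed Nmin : ℝ,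
        Nmax = max |ξ₁| (max |ξ₂| |ξ₃|) →
        Nmin = min |ξ₁| (min |ξ₂| |ξ₃|) →
        Nmed = |ξ₁| + |ξ₂| + |ξ₃| - Nmax - Nmin →
        N₀ ≤ Nmed →
        C * Nmax^4 * Nmin ≤
          |(-β * ξ₁^5 + α * ξ₁^3) + (-β * ξ₂^5 + α * ξ₂^3) +
            (-β * ξ₃^5 + α * ξ₃^3)| := by
  have hB : (0:ℝ) < |β| := abs_pos.mpr hβ
  have hx : (0:ℝ) ≤ 3 * |α| / |β| := by positivity
  refine ⟨|β| / 2, by positivity, Real.sqrt (3 * |α| / |β|) + 1,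
    by positivity, ?_⟩
  intro ξ₁ ξ₂ ξ₃ hsum Nmax Nmed Nmin hM hm hd hN
  set a := |ξ₁| with ha
  set b := |ξ₂| with hb
  set c := |ξ₃| with hc
  have ha0 : 0 ≤ a := abs_nonneg _
  have hb0 : 0 ≤ b := abs_nonneg _
  have hc0 : 0 ≤ c := abs_nonneg _
  obtain ⟨hdm, hdM, hprod⟩ := med_aux a b c
  rw [← hM, ← hm] at hdm hdM hprod
  rw [← hd] at hdm hdM hprod
  -- triangle inequalities
  have t1 : a ≤ b + c := by
    have : ξ₁ = -(ξ₂ + ξ₃) := by linarith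
    rw [ha, this, abs_neg]; exact abs_add_le _ _
  have t2 : b ≤ a + c := by
    have : ξ₂ = -(ξ₁ + ξ₃) := by linarith
    rw [hb, this, abs_neg]; exact abs_add_le _ _
  have t3 : c ≤ a + b := by
    have : ξ₃ = -(ξ₁ + ξ₂) := by linarith
    rw [hc, this, abs_neg]; exact abs_add_le _ _
  -- 2 * Nmax ≤ a + b + c
  have hMabc : Nmax = a ∨ Nmax = b ∨ Nmax = c := by
    rw [hM]
    rcases max_choice a (max b c) with h | h
    · exact Or.inl h
    · rcases max_choice b c with h' | h' <;> rw [h, h'] <;> simp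
  have h2M : 2 * Nmax ≤ a + b + c := by
    rcases hMabc with h | h | h <;> rw [h] <;> linarith
  have hMD : Nmax ≤ 2 * Nmed := by linarith
  have hm0 : 0 ≤ Nmin := by rw [hm]; positivity
  have hD0 : 0 ≤ Nmed := le_trans hm0 hdm
  have hM0 : 0 ≤ Nmax := le_trans hD0 hdM
  have hN0pos : (0:ℝ) < Real.sqrt (3 * |α| / |β|) + 1 := by positivity
  have hMN : Real.sqrt (3 * |α| / |β|) + 1 ≤ Nmax := le_trans (le_trans hN hdM) le_rfl
  -- key identity
  set S := ξ₁ ^ 2 + ξ₂ ^ 2 + ξ₃ ^ 2 with hS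
  have hid : (-β * ξ₁^5 + α * ξ₁^3) + (-β * ξ₂^5 + α * ξ₂^3) +
      (-β * ξ₃^5 + α * ξ₃^3) = ξ₁ * ξ₂ * ξ₃ * (3 * α - 5 * β / 2 * S) := by
    have h3 : ξ₃ = -ξ₁ - ξ₂ := by linarith
    rw [hS, h3]; ring
  have hS0 : 0 ≤ S := by positivity
  have hSM : Nmax ^ 2 ≤ S := by
    have e1 : a ^ 2 = ξ₁ ^ 2 := sq_abs _
    have e2 : b ^ 2 = ξ₂ ^ 2 := sq_abs _
    have e3 : c ^ 2 = ξ₃ ^ 2 := sq_abs _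
    rcases hMabc with h | h | h <;> rw [h] <;> nlinarith [sq_nonneg ξ₁, sq_nonneg ξ₂, sq_nonneg ξ₃]
  have hSbig : 3 * |α| + |β| ≤ |β| * S := by
    have h1 : (Real.sqrt (3 * |α| / |β|) + 1) ^ 2 ≤ S := by
      calc (Real.sqrt (3 * |α| / |β|) + 1) ^ 2 ≤ Nmax ^ 2 := by
            apply pow_le_pow_left₀ (le_of_lt hN0pos) hMN
        _ ≤ S := hSM
    have h2 : 3 * |α| / |β| + 1 ≤ (Real.sqrt (3 * |α| / |β|) + 1) ^ 2 := by
      nlinarith [Real.sq_sqrt hx, Real.sqrt_nonneg (3 * |α| / |β|)]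
    have h3 : |β| * (3 * |α| / |β| + 1) = 3 * |α| + |β| := by
      field_simp
    have h4 := le_trans h2 h1
    have h5 : |β| * (3 * |α| / |β| + 1) ≤ |β| * S :=
      mul_le_mul_of_nonneg_left h4 (le_of_lt hB)
    rwa [h3] at h5
  -- lower bound on the symbol factor
  have hfac : |β| * S ≤ |3 * α - 5 * β / 2 * S| := by
    have h1 : |5 * β / 2 * S| - |3 * α| ≤ |5 * β / 2 * S - 3 * α| :=
      abs_sub_abs_le_abs_sub _ _
    have h2 : |5 * β / 2 * S| = 5 * |β| / 2 * S := by
      rw [abs_mul, abs_of_nonneg hS0, abs_div, abs_mul]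
      simp [abs_of_nonneg]
    have h3 : |3 * α| = 3 * |α| := by rw [abs_mul]; simp
    rw [abs_sub_comm]
    rw [h2, h3] at h1
    nlinarith
  -- product of absolute values
  have habs : |ξ₁ * ξ₂ * ξ₃| = Nmax * Nmed * Nmin := by
    rw [abs_mul, abs_mul, ← ha, ← hb, ← hc, hprod]
  calc |β| / 2 * Nmax ^ 4 * Nmin
      = (Nmax * (Nmax / 2) * Nmin) * (|β| * Nmax ^ 2) := by ring
    _ ≤ (Nmax * Nmed * Nmin) * (|β| * S) := by
        apply mul_le_mul
        · apply mul_le_mul_of_nonneg_right _ hm0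
          apply mul_le_mul_of_nonneg_left _ hM0
          linarith
        · exact mul_le_mul_of_nonneg_left hSM (le_of_lt hB)
        · positivity
        · positivity
    _ ≤ (Nmax * Nmed * Nmin) * |3 * α - 5 * β / 2 * S| := by
        apply mul_le_mul_of_nonneg_left hfac
        positivity
    _ = |(-β * ξ₁^5 + α * ξ₁^3) + (-β * ξ₂^5 + α * ξ₂^3) +
          (-β * ξ₃^5 + α * ξ₃^3)| := by
        rw [hid, abs_mul, habs]
end

section
/- Let s ≥ 0 and 0 < ε ≤ 1/4. There is a constant C such that for all dyadic N ≥ 1: ∑ over dyadic N_min ≤ N and dyadic L_min, L_med with 1 ≤ L_min ≤ L_med and L_med ≥ N⁴N_min of N^{1/2} (1+N_min)^{−s} N_min^{1/2} L_min^{−ε} L_med^{−(1/2−ε)} ≤ C. -/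
open Real

private lemma geo_aux (c : ℝ) (hc : 0 < c) :
    (0:ℝ) ≤ (2:ℝ) ^ (-c) ∧ (2:ℝ) ^ (-c) < 1 :=
  ⟨Real.rpow_nonneg (by norm_num) _,
   Real.rpow_lt_one_of_one_lt_of_neg one_lt_two (by linarith)⟩

set_option maxHeartbeats 1000000 in
theorem dyadic_sum_bilinear_high_modulation_s_nonneg (s ε : ℝ)
    (hs : 0 ≤ s) (hε1 : 0 < ε) (hε2 : ε ≤ 1/4) :
    ∃ C : ℝ, ∀ m : ℕ,
      (∑' p : ℤ × ℕ × ℕ,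
        if (2:ℝ)^p.1 ≤ (2:ℝ)^(m:ℤ) ∧ p.2.1 ≤ p.2.2 ∧
            ((2:ℝ)^(m:ℤ))^4 * (2:ℝ)^p.1 ≤ (2:ℝ)^p.2.2 then
          ((2:ℝ)^(m:ℤ))^((1:ℝ)/2) * (1 + (2:ℝ)^p.1)^(-s) * ((2:ℝ)^p.1)^((1:ℝ)/2)
            * ((2:ℝ)^p.2.1)^(-ε) * ((2:ℝ)^p.2.2)^(-(1/2 - ε))
        else 0) ≤ C := by
  set r1 : ℝ := (2:ℝ) ^ (-(ε + 1/40)) with hr1def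
  set r2 : ℝ := (2:ℝ) ^ (-ε) with hr2def
  set r3 : ℝ := (2:ℝ) ^ (-(1/40 : ℝ)) with hr3def
  obtain ⟨hr1n, hr1l⟩ := geo_aux (ε + 1/40) (by linarith)
  obtain ⟨hr2n, hr2l⟩ := geo_aux ε hε1
  obtain ⟨hr3n, hr3l⟩ := geo_aux (1/40) (by norm_num)
  have hs1 : Summable (fun n : ℕ => r1 ^ n) := summable_geometric_of_lt_one hr1n hr1l
  have hs2 : Summable (fun n : ℕ => r2 ^ n) := summable_geometric_of_lt_one hr2n hr2l
  have hs3 : Summable (fun n : ℕ => r3 ^ n) := summable_geometric_of_lt_one hr3n hr3l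
  refine ⟨(∑' n : ℕ, r1 ^ n) * ((∑' n : ℕ, r2 ^ n) * (∑' n : ℕ, r3 ^ n)), ?_⟩
  intro m
  -- majorant
  set a : ℤ → ℝ := fun i => if i ≤ (m:ℤ) then r1 ^ (((m:ℤ) - i).toNat) else 0 with hadef
  have ha_nonneg : ∀ i, 0 ≤ a i := by
    intro i; simp only [hadef]; split
    · exact pow_nonneg hr1n _
    · exact le_refl 0
  -- injection from ℕ
  have hg_inj : Function.Injective (fun n : ℕ => (m:ℤ) - n) := by
    intro x y h; simp only at h; omega
  have hg_comp : ∀ n : ℕ, a ((m:ℤ) - n) = r1 ^ n := by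
    intro n
    simp only [hadef]
    rw [if_pos (by omega)]
    congr 1
    omega
  have hg_supp : Function.support a ⊆ Set.range (fun n : ℕ => (m:ℤ) - n) := by
    intro i hi
    by_contra hcon
    apply hi
    simp only [hadef]
    rw [if_neg]
    intro hle
    refine hcon ⟨((m:ℤ) - i).toNat, ?_⟩
    simp only
    omega
  have ha_sum : Summable a := by
    rw [← Function.Injective.summable_iff hg_inj]
    · exact hs1.congr (fun n => (hg_comp n).symm)
    · intro x hx
      by_contra h
      exact hx (hg_supp h)
  have ha_tsum : ∑' i, a i = ∑' n : ℕ, r1 ^ n := by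
    rw [← Function.Injective.tsum_eq hg_inj hg_supp]
    exact tsum_congr hg_comp
  have hbc_sum : Summable (fun q : ℕ × ℕ => r2 ^ q.1 * r3 ^ q.2) :=
    hs2.mul_of_nonneg hs3 (fun n => pow_nonneg hr2n n) (fun n => pow_nonneg hr3n n)
  have hM_sum : Summable (fun p : ℤ × ℕ × ℕ => a p.1 * (r2 ^ p.2.1 * r3 ^ p.2.2)) :=
    ha_sum.mul_of_nonneg hbc_sum ha_nonneg
      (fun q => mul_nonneg (pow_nonneg hr2n _) (pow_nonneg hr3n _))
  -- pointwise bound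
  have key : ∀ p : ℤ × ℕ × ℕ,
      (if (2:ℝ)^p.1 ≤ (2:ℝ)^(m:ℤ) ∧ p.2.1 ≤ p.2.2 ∧
            ((2:ℝ)^(m:ℤ))^4 * (2:ℝ)^p.1 ≤ (2:ℝ)^p.2.2 then
          ((2:ℝ)^(m:ℤ))^((1:ℝ)/2) * (1 + (2:ℝ)^p.1)^(-s) * ((2:ℝ)^p.1)^((1:ℝ)/2)
            * ((2:ℝ)^p.2.1)^(-ε) * ((2:ℝ)^p.2.2)^(-(1/2 - ε))
        else 0) ≤ a p.1 * (r2 ^ p.2.1 * r3 ^ p.2.2) := by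
    rintro ⟨i, j, k⟩
    dsimp only
    split
    case isFalse =>
      exact mul_nonneg (ha_nonneg i)
        (mul_nonneg (pow_nonneg hr2n _) (pow_nonneg hr3n _))
    case isTrue h =>
      obtain ⟨h1, h2, h3⟩ := h
      have h2R : (0:ℝ) < 2 := two_pos
      -- rewrite zpow/pow as rpow
      have hz : ∀ n : ℤ, (2:ℝ) ^ n = (2:ℝ) ^ (n : ℝ) := fun n => (Real.rpow_intCast 2 n).symm
      have hn : ∀ n : ℕ, (2:ℝ) ^ n = (2:ℝ) ^ (n : ℝ) := fun n => (Real.rpow_natCast 2 n).symm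
      have him : (i:ℝ) ≤ (m:ℝ) := by
        rw [hz i, hz (m:ℤ)] at h1
        have := (Real.rpow_le_rpow_left_iff one_lt_two).mp h1
        exact_mod_cast this
      have himz : i ≤ (m:ℤ) := by exact_mod_cast him
      have hk : 4 * (m:ℝ) + (i:ℝ) ≤ (k:ℝ) := by
        rw [hz i, hz (m:ℤ), hn k, ← Real.rpow_natCast ((2:ℝ) ^ ((m:ℤ):ℝ)) 4,
          ← Real.rpow_mul h2R.le, ← Real.rpow_add h2R] at h3
        have := (Real.rpow_le_rpow_left_iff one_lt_two).mp h3
        push_cast at this ⊢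
        linarith
      -- value of a
      have ha_val : a i = (2:ℝ) ^ (-(ε + 1/40) * ((m:ℝ) - (i:ℝ))) := by
        simp only [hadef]
        rw [if_pos himz, hr1def, ← Real.rpow_natCast ((2:ℝ) ^ (-(ε+1/40))) _,
          ← Real.rpow_mul h2R.le]
        congr 1
        have htn : ((((m:ℤ) - i).toNat : ℕ) : ℝ) = (m:ℝ) - (i:ℝ) := by
          have h0 := Int.toNat_of_nonneg (by omega : (0:ℤ) ≤ (m:ℤ) - i)
          exact_mod_cast congrArg (fun z : ℤ => (z : ℝ)) h0
        rw [htn]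
      have hr2_val : r2 ^ j = (2:ℝ) ^ (-ε * (j:ℝ)) := by
        rw [hr2def, ← Real.rpow_natCast ((2:ℝ) ^ (-ε)) j, ← Real.rpow_mul h2R.le]
      have hr3_val : r3 ^ k = (2:ℝ) ^ (-(1/40 : ℝ) * (k:ℝ)) := by
        rw [hr3def, ← Real.rpow_natCast ((2:ℝ) ^ (-(1/40:ℝ))) k, ← Real.rpow_mul h2R.le]
      -- middle factor ≤ 1
      have hmid : (1 + (2:ℝ)^i)^(-s) ≤ 1 :=
        Real.rpow_le_one_of_one_le_of_nonpos
          (by have := zpow_pos h2R i; linarith) (by linarith)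
      have hpos1 : (0:ℝ) < ((2:ℝ)^(m:ℤ))^((1:ℝ)/2) :=
        Real.rpow_pos_of_pos (zpow_pos h2R _) _
      have hpos2 : (0:ℝ) < ((2:ℝ)^i)^((1:ℝ)/2) := Real.rpow_pos_of_pos (zpow_pos h2R _) _
      have hpos3 : (0:ℝ) < ((2:ℝ)^j)^(-ε) := Real.rpow_pos_of_pos (by positivity) _
      have hpos4 : (0:ℝ) < ((2:ℝ)^k)^(-(1/2 - ε)) := Real.rpow_pos_of_pos (by positivity) _
      calc ((2:ℝ)^(m:ℤ))^((1:ℝ)/2) * (1 + (2:ℝ)^i)^(-s) * ((2:ℝ)^i)^((1:ℝ)/2)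
            * ((2:ℝ)^j)^(-ε) * ((2:ℝ)^k)^(-(1/2 - ε))
          ≤ ((2:ℝ)^(m:ℤ))^((1:ℝ)/2) * 1 * ((2:ℝ)^i)^((1:ℝ)/2)
            * ((2:ℝ)^j)^(-ε) * ((2:ℝ)^k)^(-(1/2 - ε)) := by
            gcongr
        _ = (2:ℝ) ^ (((m:ℝ)) * (1/2) + ((i:ℝ)) * (1/2) + ((j:ℝ)) * (-ε)
              + ((k:ℝ)) * (-(1/2 - ε))) := by
            rw [hz i, hz (m:ℤ), hn j, hn k, ← Real.rpow_mul h2R.le, ← Real.rpow_mul h2R.le,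
              ← Real.rpow_mul h2R.le, ← Real.rpow_mul h2R.le, mul_one,
              ← Real.rpow_add h2R, ← Real.rpow_add h2R, ← Real.rpow_add h2R]
            congr 1
        _ ≤ (2:ℝ) ^ (-(ε + 1/40) * ((m:ℝ) - (i:ℝ)) + (-ε * (j:ℝ) + -(1/40 : ℝ) * (k:ℝ))) := by
            rw [Real.rpow_le_rpow_left_iff one_lt_two]
            nlinarith [mul_nonneg (by linarith : (0:ℝ) ≤ 1/2 - ε - 1/40)
                (by linarith : (0:ℝ) ≤ (k:ℝ) - (4*(m:ℝ) + (i:ℝ))),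
              mul_nonneg (by linarith : (0:ℝ) ≤ 3/2 - 5*ε - 5*(1/40:ℝ))
                (Nat.cast_nonneg m : (0:ℝ) ≤ (m:ℝ))]
        _ = a i * (r2 ^ j * r3 ^ k) := by
            rw [ha_val, hr2_val, hr3_val, ← Real.rpow_add h2R, ← Real.rpow_add h2R]
  -- conclude
  have hf_sum : Summable (fun p : ℤ × ℕ × ℕ =>
      if (2:ℝ)^p.1 ≤ (2:ℝ)^(m:ℤ) ∧ p.2.1 ≤ p.2.2 ∧
            ((2:ℝ)^(m:ℤ))^4 * (2:ℝ)^p.1 ≤ (2:ℝ)^p.2.2 then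
          ((2:ℝ)^(m:ℤ))^((1:ℝ)/2) * (1 + (2:ℝ)^p.1)^(-s) * ((2:ℝ)^p.1)^((1:ℝ)/2)
            * ((2:ℝ)^p.2.1)^(-ε) * ((2:ℝ)^p.2.2)^(-(1/2 - ε))
        else 0) := by
    apply Summable.of_nonneg_of_le _ key hM_sum
    intro p
    split
    · positivity
    · exact le_refl 0
  have hbc_tsum : (∑' q : ℕ × ℕ, r2 ^ q.1 * r3 ^ q.2)
      = (∑' n : ℕ, r2 ^ n) * (∑' n : ℕ, r3 ^ n) := by
    rw [Summable.tsum_prod hbc_sum]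
    calc ∑' (b : ℕ) (c : ℕ), r2 ^ b * r3 ^ c
        = ∑' (b : ℕ), r2 ^ b * ∑' (c : ℕ), r3 ^ c :=
          tsum_congr fun b => Summable.tsum_mul_left _ hs3
      _ = (∑' n : ℕ, r2 ^ n) * (∑' n : ℕ, r3 ^ n) := Summable.tsum_mul_right _ hs2
  have hM_tsum : (∑' p : ℤ × ℕ × ℕ, a p.1 * (r2 ^ p.2.1 * r3 ^ p.2.2))
      = (∑' n : ℕ, r1 ^ n) * ((∑' n : ℕ, r2 ^ n) * (∑' n : ℕ, r3 ^ n)) := by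
    rw [Summable.tsum_prod hM_sum]
    calc ∑' (i : ℤ) (q : ℕ × ℕ), a i * (r2 ^ q.1 * r3 ^ q.2)
        = ∑' (i : ℤ), a i * ((∑' n : ℕ, r2 ^ n) * (∑' n : ℕ, r3 ^ n)) :=
          tsum_congr fun i => by rw [Summable.tsum_mul_left _ hbc_sum, hbc_tsum]
      _ = (∑' i, a i) * ((∑' n : ℕ, r2 ^ n) * (∑' n : ℕ, r3 ^ n)) :=
          Summable.tsum_mul_right _ ha_sum
      _ = (∑' n : ℕ, r1 ^ n) * ((∑' n : ℕ, r2 ^ n) * (∑' n : ℕ, r3 ^ n)) := by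
          rw [ha_tsum]
  exact le_trans (Summable.tsum_le_tsum key hf_sum hM_sum) (le_of_eq hM_tsum)
end

section
/- Let β ≠ 0 and p(ξ) = −βξ⁵ + αξ³. Suppose ξ, ξ₂ are real with |ξ| ∼ N (i.e., N/2 ≤ |ξ| ≤ 2N), |ξ₂| ∼ N, and |ξ − ξ₂| ≤ N_min where N_min ≪ N. Then there are constants C, N₀ depending only on α, β such that for N ≥ N₀, every τ ∈ ℝ, and every L > 0, the set {ξ₂ : |ξ₂| ∼ N, |ξ − ξ₂| ≤ N_min, |p(ξ₂) + p(ξ − ξ₂) − τ| ≤ L} has Lebesgue measure at most C·L·N^{−3}·N_min^{−1}. -/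
open MeasureTheory

set_option maxHeartbeats 1000000 in
theorem kawahara_resonant_set_measure_separated (α β : ℝ) (hβ : β ≠ 0) :
    ∃ C > (0:ℝ), ∃ N₀ : ℝ, ∀ N Nmin : ℝ, N₀ ≤ N → 0 < Nmin → C * Nmin ≤ N →
      ∀ ξ : ℝ, N / 2 ≤ |ξ| → |ξ| ≤ 2 * N →
      ∀ τ L : ℝ, 0 < L →
        volume {ξ₂ : ℝ | N / 2 ≤ |ξ₂| ∧ |ξ₂| ≤ 2 * N ∧ |ξ - ξ₂| ≤ Nmin ∧
            |(-β * ξ₂^5 + α * ξ₂^3) + (-β * (ξ - ξ₂)^5 + α * (ξ - ξ₂)^3) - τ| ≤ L}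
          ≤ ENNReal.ofReal (C * L * (N^3)⁻¹ * Nmin⁻¹) := by
  have hb : (0:ℝ) < |β| := abs_pos.mpr hβ
  have ha : (0:ℝ) ≤ |α| := abs_nonneg α
  refine ⟨8 + 1024/|β|, by positivity, 1 + 6144*|α|/|β|, ?_⟩
  intro N Nmin hN0 hNmin hCN ξ hξ1 hξ2 τ L hL
  set C : ℝ := 8 + 1024/|β| with hCdef
  have hCpos : (0:ℝ) < C := by positivity
  have hC8 : (8:ℝ) ≤ C := le_add_of_nonneg_right (by positivity)
  have hN1 : (1:ℝ) ≤ N := le_trans (le_add_of_nonneg_right (by positivity)) hN0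
  have hNpos : (0:ℝ) < N := lt_of_lt_of_le one_pos hN1
  have hNsq : 6144*|α|/|β| ≤ N^2 := by
    nlinarith [le_trans (le_add_of_nonneg_left (by norm_num : (0:ℝ) ≤ 1)) hN0]
  have hNmin8 : Nmin ≤ N/8 := by
    have h8 : 8 * Nmin ≤ N := le_trans (mul_le_mul_of_nonneg_right hC8 hNmin.le) hCN
    linarith
  -- the phase and its derivative
  set F : ℝ → ℝ := fun x => (-β * x^5 + α * x^3) + (-β * (ξ - x)^5 + α * (ξ - x)^3) with hFdef
  set F' : ℝ → ℝ := fun x =>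
    (-β * (5*x^4) + α * (3*x^2)) - (-β * (5*(ξ-x)^4) + α * (3*(ξ-x)^2)) with hF'def
  have hF : ∀ x : ℝ, HasDerivAt F (F' x) x := by
    intro x
    have h1 : ∀ y : ℝ, HasDerivAt (fun z : ℝ => -β*z^5 + α*z^3)
        (-β*(5*y^4) + α*(3*y^2)) y := by
      intro y
      have h := ((hasDerivAt_pow 5 y).const_mul (-β)).add ((hasDerivAt_pow 3 y).const_mul α)
      first
      | simpa using h
      | (refine h.congr_deriv ?_; push_cast; ring)
    have h2 : HasDerivAt (fun z : ℝ => ξ - z) (-1) x := (hasDerivAt_id x).const_sub ξ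
    have h3 := (h1 (ξ - x)).comp x h2
    have h4 := (h1 x).add h3
    refine h4.congr_deriv ?_
    simp only [hF'def]
    ring
  set m : ℝ := 5 * |β| * N ^ 4 / 1024 with hmdef
  have hmpos : 0 < m := by positivity
  -- derivative lower bound on the interval
  have hder : ∀ x ∈ Set.Icc (ξ - Nmin) (ξ + Nmin), m ≤ |F' x| := by
    intro x hx
    have hηabs : |ξ - x| ≤ Nmin := by
      rw [abs_le]; constructor <;> [linarith [hx.2]; linarith [hx.1]]
    have hxlb : N/4 ≤ |x| := by
      have h := abs_sub_abs_le_abs_sub ξ x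
      nlinarith [hξ1, hηabs, hNmin8]
    have hxub : |x| ≤ 3*N := by
      have h := abs_sub_abs_le_abs_sub x ξ
      rw [abs_sub_comm] at h
      nlinarith [hξ2, hηabs, hNmin8]
    set η : ℝ := ξ - x with hη
    clear_value η
    have hx2 : x^2 = |x|^2 := by rw [← abs_pow, abs_of_nonneg (by positivity)]
    have hx4 : x^4 = |x|^4 := by rw [← abs_pow, abs_of_nonneg (by positivity)]
    have hη2 : η^2 = |η|^2 := by rw [← abs_pow, abs_of_nonneg (by positivity)]
    have hη4 : η^4 = |η|^4 := by rw [← abs_pow, abs_of_nonneg (by positivity)]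
    have hηN : |η| ≤ N/8 := le_trans hηabs hNmin8
    have hsplit : F' x = (-(5*β))*(x^4 - η^4) + (3*α)*(x^2 - η^2) := by
      simp only [hF'def, hη]; ring
    have e1 : |(-(5*β)) * (x^4 - η^4)| = 5 * |β| * |x^4 - η^4| := by
      rw [abs_mul, abs_neg, abs_mul]
      norm_num
    have e2 : |(3*α) * (x^2 - η^2)| = 3 * |α| * |x^2 - η^2| := by
      rw [abs_mul, abs_mul]
      norm_num
    have hx4lb : (N/4)^4 ≤ x^4 := by
      rw [hx4]; exact pow_le_pow_left₀ (by positivity) hxlb 4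
    have hη4ub : η^4 ≤ (N/8)^4 := by
      rw [hη4]; exact pow_le_pow_left₀ (abs_nonneg _) hηN 4
    have habs14 : |x^4 - η^4| = x^4 - η^4 :=
      abs_of_nonneg (by nlinarith [hx4lb, hη4ub, pow_pos hNpos 4])
    have habs12 : |x^2 - η^2| ≤ x^2 + η^2 := by
      calc |x^2 - η^2| = |x^2 + -(η^2)| := by rw [sub_eq_add_neg]
        _ ≤ |x^2| + |(-(η^2))| := abs_add_le _ _
        _ = x^2 + η^2 := by
            rw [abs_neg, abs_of_nonneg (sq_nonneg x), abs_of_nonneg (sq_nonneg η)]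
    have hx2ub : x^2 ≤ 9*N^2 := by rw [hx2]; nlinarith [abs_nonneg x]
    have hη2ub : η^2 ≤ N^2 := by rw [hη2]; nlinarith [abs_nonneg η, hNpos]
    have key : m + 3 * |α| * |x^2 - η^2| ≤ 5 * |β| * |x^4 - η^4| := by
      rw [habs14]
      have h1 : 3*|α| * |x^2 - η^2| ≤ 3*|α| * (10*N^2) := by
        apply mul_le_mul_of_nonneg_left _ (by positivity)
        linarith
      have h2 : 5*|β| * ((N/4)^4 - (N/8)^4) ≤ 5*|β| * (x^4 - η^4) :=
        mul_le_mul_of_nonneg_left (by linarith) (by positivity)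
      have hNsq' : 6144*|α| ≤ |β| * N^2 := by
        rw [div_le_iff₀ hb] at hNsq; linarith [hNsq]
      rw [hmdef]
      nlinarith [sq_nonneg N, hNpos, mul_pos hb (pow_pos hNpos 2)]
    have habs : 5 * |β| * |x^4 - η^4| ≤ |F' x| + 3 * |α| * |x^2 - η^2| := by
      rw [← e1, ← e2]
      calc |(-(5*β)) * (x^4 - η^4)|
          = |F' x + -((3*α) * (x^2 - η^2))| := by
            congr 1; rw [hsplit]; ring
        _ ≤ |F' x| + |(-((3*α) * (x^2 - η^2)))| := abs_add_le _ _
        _ = |F' x| + |(3*α) * (x^2 - η^2)| := by rw [abs_neg]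
    linarith
  -- the set
  set S : Set ℝ := {ξ₂ : ℝ | N / 2 ≤ |ξ₂| ∧ |ξ₂| ≤ 2 * N ∧ |ξ - ξ₂| ≤ Nmin ∧
      |(-β * ξ₂^5 + α * ξ₂^3) + (-β * (ξ - ξ₂)^5 + α * (ξ - ξ₂)^3) - τ| ≤ L} with hSdef
  have hSsub : S ⊆ Set.Icc (ξ - Nmin) (ξ + Nmin) := by
    intro y hy
    have := hy.2.2.1
    rw [abs_le] at this
    constructor <;> linarith [this.1, this.2]
  have hSF : ∀ y ∈ S, |F y - τ| ≤ L := fun y hy => hy.2.2.2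
  rcases Set.eq_empty_or_nonempty S with hemp | ⟨a, haS⟩
  · rw [hemp]; simp
  · have main : ∀ u ∈ S, ∀ v ∈ S, u < v → v - u ≤ 2*L/m := by
      intro u hu v hv huv
      obtain ⟨c, hc, hceq⟩ := exists_hasDerivAt_eq_slope F F' huv
        (fun x _ => (hF x).continuousAt.continuousWithinAt) (fun x _ => hF x)
      have hcI : c ∈ Set.Icc (ξ - Nmin) (ξ + Nmin) :=
        ⟨le_trans (hSsub hu).1 hc.1.le, le_trans hc.2.le (hSsub hv).2⟩
      have h1 : m ≤ |F' c| := hder c hcI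
      rw [hceq, abs_div, abs_of_pos (by linarith : (0:ℝ) < v - u)] at h1
      have h2 : |F v - F u| ≤ 2*L := by
        have e : F v - F u = (F v - τ) + -(F u - τ) := by ring
        calc |F v - F u| = |(F v - τ) + -(F u - τ)| := by rw [e]
          _ ≤ |F v - τ| + |(-(F u - τ))| := abs_add_le _ _
          _ = |F v - τ| + |F u - τ| := by rw [abs_neg]
          _ ≤ 2*L := by linarith [hSF v hv, hSF u hu]
      rw [le_div_iff₀ (by linarith)] at h1
      rw [le_div_iff₀ hmpos]
      nlinarith
    have hdiam : ∀ b ∈ S, |b - a| ≤ 2*L/m := by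
      intro b hb
      rcases lt_trichotomy a b with h|h|h
      · rw [abs_of_pos (by linarith)]; exact main a haS b hb h
      · simp [h, (by positivity : (0:ℝ) ≤ 2*L/m)]
      · rw [abs_of_neg (by linarith)]
        have := main b hb a haS h; linarith
    have hSsub2 : S ⊆ Set.Icc (a - 2*L/m) (a + 2*L/m) := by
      intro b hb
      have := hdiam b hb
      rw [abs_le] at this
      constructor <;> linarith [this.1, this.2]
    calc volume S ≤ volume (Set.Icc (a - 2*L/m) (a + 2*L/m)) := measure_mono hSsub2
      _ = ENNReal.ofReal (4*L/m) := by rw [Real.volume_Icc]; congr 1; ring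
      _ ≤ ENNReal.ofReal (C * L * (N^3)⁻¹ * Nmin⁻¹) := by
          apply ENNReal.ofReal_le_ofReal
          rw [hmdef, div_le_iff₀ (by positivity)]
          have hbC : |β| * C = 8 * |β| + 1024 := by
            rw [hCdef]; field_simp
          have hC2 : 4096 ≤ 5 * |β| * C ^ 2 := by
            nlinarith [hbC, hC8, hb, hCpos]
          have key : 4096 * Nmin ≤ 5 * |β| * C * N := by
            nlinarith [hCN, hNmin, hCpos, hb]
          have hrw : C * L * (N^3)⁻¹ * Nmin⁻¹ * (5 * |β| * N ^ 4 / 1024)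
              = (5 * |β| * C * N) * L / (1024 * Nmin) := by
            field_simp
          rw [hrw, le_div_iff₀ (by positivity)]
          nlinarith [mul_le_mul_of_nonneg_left key hL.le]
end
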